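/- Let q ≥ 1 and let S_{0,q} denote the oriented star on q+1 vertices consisting of a center vertex with q out-neighbours (all arcs directed from the center to the leaves). Then for every n ≥ 2q−1, exo(n, S_{0,q}) = (q−1)·n. -/

import Mathlib

/-- An oriented graph `G` contains a copy of the oriented graph `F`. -/
def Copies {α β : Type*} (F : α → α → Prop) (G : β → β → Prop) : Prop :=
  ∃ f : α → β, Function.Injective f ∧ ∀ a b, F a b → G (f a) (f b)

/-- The oriented Turán number. -/
noncomputable def exo {α : Type*} (n : ℕ) (F : α → α → Prop) : ℕ :=
  sSup {m : ℕ | ∃ G : Fin n → Fin n → Prop,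
    (∀ v, ¬ G v v) ∧ (∀ u v, G u v → ¬ G v u) ∧
    ¬ Copies F G ∧ {p : Fin n × Fin n | G p.1 p.2}.ncard = m}

/-- The oriented star `S_{0,q}` on `q+1` vertices: the center `0` has `q` out-neighbours. -/
def outStar (q : ℕ) (i j : Fin (q + 1)) : Prop :=
  (i : ℕ) = 0 ∧ (j : ℕ) ≠ 0

open Finset

section Aux
variable {n q : ℕ}

open scoped Classical

private lemma ncard_out (G : Fin n → Fin n → Prop) (v : Fin n) :
    {u | G v u}.ncard = (univ.filter (fun u => G v u)).card := by
  rw [Set.ncard_eq_toFinset_card']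
  congr 1; ext u; simp

private lemma ncard_arcs (G : Fin n → Fin n → Prop) :
    {p : Fin n × Fin n | G p.1 p.2}.ncard
      = ∑ v : Fin n, (univ.filter (fun u => G v u)).card := by
  have h1 : {p : Fin n × Fin n | G p.1 p.2}.ncard
      = (univ.filter (fun p : Fin n × Fin n => G p.1 p.2)).card := by
    rw [Set.ncard_eq_toFinset_card']
    congr 1; ext p; simp
  rw [h1, Finset.card_eq_sum_card_fiberwise
    (f := Prod.fst) (t := univ) (fun x _ => mem_univ _)]
  refine Finset.sum_congr rfl fun v _ => ?_
  apply Finset.card_bij (fun p _ => p.2)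
  · intro p hp; simp only [mem_filter, mem_univ, true_and] at hp ⊢
    rw [← hp.2]; exact hp.1
  · intro p hp p' hp' h
    simp only [mem_filter, mem_univ, true_and] at hp hp'
    exact Prod.ext (hp.2.trans hp'.2.symm) h
  · intro u hu; simp only [mem_filter, mem_univ, true_and] at hu
    exact ⟨(v, u), by simp [hu], rfl⟩

private lemma copies_of_deg (G : Fin n → Fin n → Prop)
    (hirr : ∀ v, ¬ G v v) (v : Fin n)
    (hv : q ≤ (univ.filter (fun u => G v u)).card) :
    Copies (outStar q) G := by
  obtain ⟨T, hTsub, hTcard⟩ := Finset.exists_subset_card_eq hv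
  set e := T.orderIsoOfFin hTcard with he
  have hvT : v ∉ T := fun h => hirr v (by simpa using hTsub h)
  refine ⟨fun i => if h : (i : ℕ) = 0 then v
      else (e ⟨(i : ℕ) - 1, by have := i.isLt; omega⟩ : Fin n), ?_, ?_⟩
  · intro a b hab
    dsimp only at hab
    by_cases ha : (a : ℕ) = 0 <;> by_cases hb : (b : ℕ) = 0
    · exact Fin.ext (ha.trans hb.symm)
    · rw [dif_pos ha, dif_neg hb] at hab
      exact absurd (hab ▸ (e _).2) hvT
    · rw [dif_neg ha, dif_pos hb] at hab
      exact absurd (hab ▸ (e _).2) hvT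
    · rw [dif_neg ha, dif_neg hb] at hab
      have h' := e.injective (Subtype.coe_injective hab)
      have hab' : (a : ℕ) - 1 = (b : ℕ) - 1 := congrArg Fin.val h'
      exact Fin.ext (by omega)
  · rintro a b ⟨ha, hb⟩
    dsimp only
    rw [dif_pos ha, dif_neg hb]
    have := (e ⟨(b : ℕ) - 1, by have := b.isLt; omega⟩).2
    have := hTsub this
    simpa using this

private lemma deg_of_copies (G : Fin n → Fin n → Prop)
    (h : Copies (outStar q) G) :
    ∃ v : Fin n, q ≤ (univ.filter (fun u => G v u)).card := by
  obtain ⟨f, hfinj, hf⟩ := h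
  refine ⟨f 0, ?_⟩
  have hsub : (univ.filter (fun b : Fin (q + 1) => (b : ℕ) ≠ 0)).image f
      ⊆ univ.filter (fun u => G (f 0) u) := by
    intro u hu
    simp only [mem_image, mem_filter, mem_univ, true_and] at hu ⊢
    obtain ⟨b, hb, rfl⟩ := hu
    exact hf 0 b ⟨rfl, hb⟩
  have hcard : (univ.filter (fun b : Fin (q + 1) => (b : ℕ) ≠ 0)).card = q := by
    have : univ.filter (fun b : Fin (q + 1) => (b : ℕ) ≠ 0) = univ.erase 0 := by
      ext b; simp only [mem_filter, mem_univ, true_and, mem_erase, and_true, ne_eq, Fin.val_eq_zero_iff]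
    rw [this, card_erase_of_mem (mem_univ _), card_univ, Fintype.card_fin]
    omega
  calc q = ((univ.filter (fun b : Fin (q + 1) => (b : ℕ) ≠ 0)).image f).card := by
        rw [Finset.card_image_of_injective _ hfinj, hcard]
    _ ≤ _ := card_le_card hsub

/-- The circulant construction: `i → i + k (mod n)` for `1 ≤ k < q`. -/
private def circ (n q : ℕ) (i j : Fin n) : Prop :=
  ∃ k : ℕ, 1 ≤ k ∧ k < q ∧ (j : ℕ) = ((i : ℕ) + k) % n

private lemma circ_irrefl (hqn : q ≤ n) (v : Fin n) : ¬ circ n q v v := by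
  rintro ⟨k, hk1, hk2, hk3⟩
  have hv := v.isLt
  have h2 : ((v : ℕ) + k) % n = ((v : ℕ) + 0) % n := by
    rw [Nat.add_zero, Nat.mod_eq_of_lt hv]; exact hk3.symm
  have h3 : k % n = 0 % n := Nat.ModEq.add_left_cancel' (v : ℕ) h2
  rw [Nat.zero_mod, Nat.mod_eq_of_lt (by omega)] at h3
  omega

private lemma circ_asymm (hn : 2 * q - 1 ≤ n) (u v : Fin n) :
    circ n q u v → ¬ circ n q v u := by
  rintro ⟨k, hk1, hk2, hk3⟩ ⟨l, hl1, hl2, hl3⟩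
  have h1 : (u : ℕ) = ((u : ℕ) + (k + l)) % n := by
    conv_lhs => rw [hl3, hk3]
    rw [Nat.mod_add_mod, Nat.add_assoc]
  have h2 : ((u : ℕ) + (k + l)) % n = ((u : ℕ) + 0) % n := by
    rw [Nat.add_zero, Nat.mod_eq_of_lt u.isLt]; exact h1.symm
  have h3 : (k + l) % n = 0 % n := Nat.ModEq.add_left_cancel' (u : ℕ) h2
  rw [Nat.zero_mod, Nat.mod_eq_of_lt (by omega)] at h3
  omega

private lemma circ_deg_card (hn0 : 0 < n) (hqn : q ≤ n) (v : Fin n) :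
    (univ.filter (fun u => circ n q v u)).card = q - 1 := by
  have hset : univ.filter (fun u => circ n q v u)
      = (Finset.Ico 1 q).image
          (fun k => (⟨((v : ℕ) + k) % n, Nat.mod_lt _ hn0⟩ : Fin n)) := by
    ext u
    simp only [Finset.mem_filter, Finset.mem_univ, true_and, Finset.mem_image, Finset.mem_Ico]
    simp only [circ, Fin.ext_iff]
    constructor
    · rintro ⟨k, hk1, hk2, hk3⟩; exact ⟨k, ⟨hk1, hk2⟩, hk3.symm⟩
    · rintro ⟨k, ⟨hk1, hk2⟩, hk3⟩; exact ⟨k, hk1, hk2, hk3.symm⟩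
  rw [hset, Finset.card_image_of_injOn, Nat.card_Ico]
  intro k hk k' hk' h
  simp only [coe_Ico, Set.mem_Ico] at hk hk'
  have h' : ((v : ℕ) + k) % n = ((v : ℕ) + k') % n := by
    simpa [Fin.ext_iff] using h
  have h1 : k % n = k' % n := Nat.ModEq.add_left_cancel' (v : ℕ) h'
  rwa [Nat.mod_eq_of_lt (by omega), Nat.mod_eq_of_lt (by omega)] at h1

end Aux

/-- for `q ≥ 1` and every `n ≥ 2q - 1`, `exo(n, S_{0,q}) = (q-1)·n`. -/
theorem stmt_7 (q : ℕ) (hq : 1 ≤ q) :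
    ∀ n : ℕ, 2 * q - 1 ≤ n → exo n (outStar q) = (q - 1) * n := by
  classical
  intro n hn
  have hn0 : 0 < n := by omega
  have hqn : q ≤ n := by omega
  have hgreat : IsGreatest {m : ℕ | ∃ G : Fin n → Fin n → Prop,
      (∀ v, ¬ G v v) ∧ (∀ u v, G u v → ¬ G v u) ∧
      ¬ Copies (outStar q) G ∧ {p : Fin n × Fin n | G p.1 p.2}.ncard = m}
      ((q - 1) * n) := by
    constructor
    · refine ⟨circ n q, fun v => circ_irrefl hqn v, circ_asymm hn, ?_, ?_⟩
      · intro hc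
        obtain ⟨v, hv⟩ := deg_of_copies _ hc
        have := circ_deg_card hn0 hqn v
        omega
      · rw [ncard_arcs]
        have : ∀ v : Fin n, (Finset.univ.filter (fun u => circ n q v u)).card = q - 1 :=
          circ_deg_card hn0 hqn
        simp [this, Finset.sum_const, mul_comm]
    · rintro m ⟨G, hG1, hG2, hG3, rfl⟩
      rw [ncard_arcs]
      have hdeg : ∀ v : Fin n, (Finset.univ.filter (fun u => G v u)).card ≤ q - 1 := by
        intro v
        by_contra h
        exact hG3 (copies_of_deg G hG1 v (by omega))
      calc ∑ v : Fin n, (Finset.univ.filter (fun u => G v u)).card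
          ≤ ∑ _v : Fin n, (q - 1) := Finset.sum_le_sum fun v _ => hdeg v
        _ = (q - 1) * n := by simp [Finset.sum_const, mul_comm]
  exact hgreat.csSup_eq
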